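/- arXiv:1712.04930 — 6 statements merged into one kernel-verified Lean document; each statement's English description precedes it below -/
import Mathlib

section
/- Let h > r ≥ 1 be integers, K = C(h,r), K̂ = C(h−1,r−1), and let D ≥ K be the number of files. Let t1, t2 ∈ {0,1,…,K̂} and let a, b be nonnegative integers with 2^(K̂·a + C(K̂,t2)·b) ≥ h, and set F = r·(K̂·a + C(K̂,t2)·b). Then there exists a caching scheme for the combination network: for each relay j a placement function mapping any realization of the D files (each an F-bit string) to a relay-cache string of D·K̂·a bits; for each user U (an r-element subset of the h relays) a placement function mapping the files to a user-cache string of D·r·(t1·a + C(K̂−1,t2−1)·b) bits; for every demand vector d (assigning a file index to each user) a server-to-relay signal X_j of C(K̂,t2+1)·b bits for each relay j, computed from the files and d; for each relay j and each connected user U a relay-to-user signal Y_{j,U} of C(K̂−1,t2)·b + (K̂−t1)·a bits computed only from (X_j, relay j's cache, d); and for each user U a decoding function such that, for every realization of the D files and every demand vector d, user U reconstructs its requested file exactly from its cache content, d, and the r signals {Y_{j,U} : j ∈ U}. (These bit counts correspond to relay memory N·F = D·K̂·a bits, user memory M·F bits with M = (t1−t2)·N·r/K̂ + t2·D/K̂,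 first-hop rate R1 = ((K̂−t2)/(r(t2+1)))·(1 − N·r/D), and second-hop rate R2 = (1/r)(1 − M/D).) -/
open Finset Polynomial

namespace Stmt0Aux

noncomputable instance (m : ℕ) : Fintype (GaloisField 2 m) := Fintype.ofFinite _

noncomputable def bitsEquiv (m : ℕ) (hm : m ≠ 0) : (Fin m → Bool) ≃ GaloisField 2 m :=
  Fintype.equivOfCardEq (by
    rw [← Nat.card_eq_fintype_card (α := GaloisField 2 m), GaloisField.card 2 m hm]
    simp)

noncomputable def embFin (α : Type*) [Fintype α] {n : ℕ} (hc : Fintype.card α ≤ n) : α ↪ Fin n :=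
  (Fintype.equivFin α).toEmbedding.trans (Fin.castLEEmb hc)

def bZ : Bool ≃ ZMod 2 where
  toFun c := cond c 1 0
  invFun x := decide (x = 1)
  left_inv := by decide
  right_inv := by decide

lemma add_add_self (x s : ZMod 2) : x + s + s = x := by revert x s; decide

noncomputable def msgPoly {K : Type*} [Semiring K] {r : ℕ} (c : Fin r → K) : Polynomial K :=
  ∑ k : Fin r, Polynomial.monomial k.1 (c k)

lemma msgPoly_coeff {K : Type*} [Semiring K] {r : ℕ} (c : Fin r → K) (k : Fin r) :
    (msgPoly c).coeff k.1 = c k := by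
  simp [msgPoly, Polynomial.finset_sum_coeff, Polynomial.coeff_monomial, Fin.val_eq_val]

lemma msgPoly_degree {K : Type*} [Semiring K] {r : ℕ} (_hr : 0 < r) (c : Fin r → K) :
    (msgPoly c).degree < (r : WithBot ℕ) := by
  refine lt_of_le_of_lt (Polynomial.degree_sum_le _ _) ?_
  rw [Finset.sup_lt_iff (by exact_mod_cast WithBot.bot_lt_coe r)]
  intro k _
  exact lt_of_le_of_lt (Polynomial.degree_monomial_le _ _) (by exact_mod_cast k.2)

lemma card_mem_subsets_le (n k : ℕ) (u : Fin n) :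
    Fintype.card {T : {T : Finset (Fin n) // T.card = k} // u ∈ T.1.1}
      ≤ Nat.choose (n - 1) (k - 1) := by
  classical
  have hinj : Function.Injective
      (fun T : {T : {T : Finset (Fin n) // T.card = k} // u ∈ T.1.1} =>
        (⟨T.1.1.erase u, by
          rw [Finset.mem_powersetCard]
          exact ⟨Finset.erase_subset_erase u (Finset.subset_univ _),
            by rw [Finset.card_erase_of_mem T.2, T.1.2]⟩⟩ :
          {T' : Finset (Fin n) // T' ∈ (Finset.univ.erase u).powersetCard (k - 1)})) := by
    intro A B hAB
    have h1 : A.1.1.erase u = B.1.1.erase u := congrArg Subtype.val hAB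
    have h2 : A.1.1 = B.1.1 := by
      rw [← Finset.insert_erase A.2, ← Finset.insert_erase B.2, h1]
    exact Subtype.ext (Subtype.ext h2)
  have hc := Fintype.card_le_of_injective _ hinj
  rwa [Fintype.card_coe, Finset.card_powersetCard,
    Finset.card_erase_of_mem (Finset.mem_univ u), Finset.card_univ, Fintype.card_fin] at hc

lemma card_users (h r : ℕ) (hr : 1 ≤ r) (j : Fin h) :
    Fintype.card {U : {U : Finset (Fin h) // U.card = r} // j ∈ U.1.1}
      = Nat.choose (h - 1) (r - 1) := by
  classical
  have e : {U : {U : Finset (Fin h) // U.card = r} // j ∈ U.1.1} ≃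
      {T : Finset (Fin h) // T ∈ (Finset.univ.erase j).powersetCard (r - 1)} :=
    { toFun := fun U => ⟨U.1.1.erase j, by
        rw [Finset.mem_powersetCard]
        exact ⟨Finset.erase_subset_erase j (Finset.subset_univ _),
          by rw [Finset.card_erase_of_mem U.2, U.1.2]⟩⟩
      invFun := fun T => ⟨⟨insert j T.1, by
        have hmem := Finset.mem_powersetCard.1 T.2
        have hj : j ∉ T.1 := fun hj => (Finset.mem_erase.1 (hmem.1 hj)).1 rfl
        rw [Finset.card_insert_of_notMem hj, hmem.2]
        omega⟩, Finset.mem_insert_self j T.1⟩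
      left_inv := fun U => Subtype.ext (Subtype.ext (Finset.insert_erase U.2))
      right_inv := fun T => by
        have hmem := Finset.mem_powersetCard.1 T.2
        have hj : j ∉ T.1 := fun hj => (Finset.mem_erase.1 (hmem.1 hj)).1 rfl
        exact Subtype.ext (Finset.erase_insert hj) }
  rw [Fintype.card_congr e, Fintype.card_coe, Finset.card_powersetCard,
    Finset.card_erase_of_mem (Finset.mem_univ j), Finset.card_univ, Fintype.card_fin]


section Scheme

variable {h r Khat D t1 t2 a b m F : ℕ}

/-- All the (noncanonical) indexing data used by the scheme. -/
structure Setup (h r Khat D t1 t2 a b m F : ℕ) where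
  ef : (Fin m → Bool) ≃ GaloisField 2 m
  pts : Fin h ↪ GaloisField 2 m
  eqF : Fin F ≃ Fin r × Fin m
  em : ((Fin Khat × Fin a) ⊕ (Fin (Nat.choose Khat t2) × Fin b)) ≃ Fin m
  phi : (j : Fin h) → {U : {U : Finset (Fin h) // U.card = r} // j ∈ U.1.1} ≃ Fin Khat
  rho : (U : {U : Finset (Fin h) // U.card = r}) → Fin r ≃ {j : Fin h // j ∈ U.1}
  tau : {T : Finset (Fin Khat) // T.card = t2} ≃ Fin (Nat.choose Khat t2)
  sig : {S : Finset (Fin Khat) // S.card = t2 + 1} ≃ Fin (Nat.choose Khat (t2 + 1))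
  iT : (u : Fin Khat) → {T : {T : Finset (Fin Khat) // T.card = t2} // u ∈ T.1.1} ↪
        Fin (Nat.choose (Khat - 1) (t2 - 1))
  iY : (u : Fin Khat) → {S : {S : Finset (Fin Khat) // S.card = t2 + 1} // u ∈ S.1.1} ↪
        Fin (Nat.choose (Khat - 1) t2)
  ht1 : t1 ≤ Khat

variable (St : Setup h r Khat D t1 t2 a b m F)

/-- index equivalence for the relay cache -/
def eRC : (Fin D × Fin Khat) × Fin a ≃ Fin (D * Khat * a) :=
  (Equiv.prodCongr finProdFinEquiv (Equiv.refl (Fin a))).trans finProdFinEquiv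

/-- index equivalence for the user cache -/
def eUC : (Fin D × Fin r) × ((Fin t1 × Fin a) ⊕ (Fin (Nat.choose (Khat - 1) (t2 - 1)) × Fin b))
    ≃ Fin (D * r * (t1 * a + Nat.choose (Khat - 1) (t2 - 1) * b)) :=
  (Equiv.prodCongr finProdFinEquiv
    ((Equiv.sumCongr finProdFinEquiv finProdFinEquiv).trans finSumFinEquiv)).trans finProdFinEquiv

/-- index equivalence for the server-to-relay signal -/
def eX : Fin (Nat.choose Khat (t2 + 1)) × Fin b ≃ Fin (Nat.choose Khat (t2 + 1) * b) :=
  finProdFinEquiv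

/-- index equivalence for the relay-to-user signal -/
def eY : (Fin (Nat.choose (Khat - 1) t2) × Fin b) ⊕ (Fin (Khat - t1) × Fin a)
    ≃ Fin (Nat.choose (Khat - 1) t2 * b + (Khat - t1) * a) :=
  (Equiv.sumCongr finProdFinEquiv finProdFinEquiv).trans finSumFinEquiv

/-- the `r` field symbols of file `i` -/
noncomputable def coeffs (w : Fin D → Fin F → Bool) (i : Fin D) (k : Fin r) :
    GaloisField 2 m :=
  St.ef fun μ => w i (St.eqF.symm (k, μ))

/-- the bits of the MDS-coded symbol of file `i` at relay `j` -/
noncomputable def sbits (w : Fin D → Fin F → Bool) (i : Fin D) (j : Fin h) : Fin m → Bool :=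
  St.ef.symm ((msgPoly (coeffs St w i)).eval (St.pts j))

/-- `a`-chunks of the coded symbol -/
noncomputable def apart (w : Fin D → Fin F → Bool) (i : Fin D) (j : Fin h)
    (u : Fin Khat) (α : Fin a) : Bool :=
  sbits St w i j (St.em (Sum.inl (u, α)))

/-- `b`-chunks of the coded symbol, indexed by `t2`-subsets -/
noncomputable def bchunk (w : Fin D → Fin F → Bool) (i : Fin D) (j : Fin h)
    (T : {T : Finset (Fin Khat) // T.card = t2}) (β : Fin b) : Bool :=
  sbits St w i j (St.em (Sum.inr (St.tau T, β)))

/-- `b`-chunks as a total function on plain finsets -/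
noncomputable def bchunk' (w : Fin D → Fin F → Bool) (i : Fin D) (j : Fin h)
    (T : Finset (Fin Khat)) (β : Fin b) : Bool :=
  if hT : T.card = t2 then bchunk St w i j ⟨T, hT⟩ β else false

/-- the demand of the `u`-th user of relay `j` -/
def dem (d : {U : Finset (Fin h) // U.card = r} → Fin D) (j : Fin h) (u : Fin Khat) : Fin D :=
  d ((St.phi j).symm u).1

noncomputable def relayPlaceF (j : Fin h) (w : Fin D → Fin F → Bool) :
    Fin (D * Khat * a) → Bool := fun x =>
  apart St w (eRC.symm x).1.1 j (eRC.symm x).1.2 (eRC.symm x).2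

noncomputable def userContent (U : {U : Finset (Fin h) // U.card = r})
    (w : Fin D → Fin F → Bool) (i : Fin D) (k : Fin r)
    (s : (Fin t1 × Fin a) ⊕ (Fin (Nat.choose (Khat - 1) (t2 - 1)) × Fin b)) : Bool :=
  Sum.elim
    (fun vα => apart St w i (St.rho U k).1 (Fin.castLE St.ht1 vα.1) vα.2)
    (fun pβ =>
      (Function.partialInv (St.iT (St.phi (St.rho U k).1 ⟨U, (St.rho U k).2⟩)) pβ.1).elim
        false (fun P => bchunk St w i (St.rho U k).1 P.1 pβ.2))
    s

noncomputable def userPlaceF (U : {U : Finset (Fin h) // U.card = r})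
    (w : Fin D → Fin F → Bool) :
    Fin (D * r * (t1 * a + Nat.choose (Khat - 1) (t2 - 1) * b)) → Bool := fun x =>
  userContent St U w (eUC.symm x).1.1 (eUC.symm x).1.2 (eUC.symm x).2

noncomputable def Xcontent (j : Fin h) (w : Fin D → Fin F → Bool)
    (d : {U : Finset (Fin h) // U.card = r} → Fin D)
    (q : Fin (Nat.choose Khat (t2 + 1))) (β : Fin b) : Bool :=
  bZ.symm (∑ u ∈ (St.sig.symm q).1,
    bZ (bchunk' St w (dem St d j u) j ((St.sig.symm q).1.erase u) β))

noncomputable def XsigF (j : Fin h) (w : Fin D → Fin F → Bool)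
    (d : {U : Finset (Fin h) // U.card = r} → Fin D) :
    Fin (Nat.choose Khat (t2 + 1) * b) → Bool := fun x =>
  Xcontent St j w d (eX.symm x).1 (eX.symm x).2

noncomputable def Ycontent (j : Fin h) (U : {U : Finset (Fin h) // U.card = r})
    (xj : Fin (Nat.choose Khat (t2 + 1) * b) → Bool)
    (cache : Fin (D * Khat * a) → Bool)
    (d : {U : Finset (Fin h) // U.card = r} → Fin D) :
    (Fin (Nat.choose (Khat - 1) t2) × Fin b) ⊕ (Fin (Khat - t1) × Fin a) → Bool := fun s =>
  if hjU : j ∈ U.1 then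
    Sum.elim
      (fun pβ =>
        (Function.partialInv (St.iY (St.phi j ⟨U, hjU⟩)) pβ.1).elim
          false (fun P => xj (eX (St.sig P.1, pβ.2))))
      (fun κα => cache (eRC ((d U,
        ⟨t1 + κα.1.1, by have h1 := κα.1.2; have h2 := St.ht1; omega⟩), κα.2)))
      s
  else false

noncomputable def YsigF (j : Fin h) (U : {U : Finset (Fin h) // U.card = r})
    (xj : Fin (Nat.choose Khat (t2 + 1) * b) → Bool)
    (cache : Fin (D * Khat * a) → Bool)
    (d : {U : Finset (Fin h) // U.card = r} → Fin D) :
    Fin (Nat.choose (Khat - 1) t2 * b + (Khat - t1) * a) → Bool := fun x =>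
  Ycontent St j U xj cache d (eY.symm x)

/-- reconstruction by user `U` of the bits of the coded symbol of its demanded file at its
`k`-th relay -/
noncomputable def recB (U : {U : Finset (Fin h) // U.card = r})
    (cache : Fin (D * r * (t1 * a + Nat.choose (Khat - 1) (t2 - 1) * b)) → Bool)
    (d : {U : Finset (Fin h) // U.card = r} → Fin D)
    (sg : (j : Fin h) → j ∈ U.1 →
      (Fin (Nat.choose (Khat - 1) t2 * b + (Khat - t1) * a) → Bool))
    (k : Fin r) : Fin m → Bool := fun μ =>
  Sum.elim
    (fun vα : Fin Khat × Fin a =>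
      if hv : vα.1.1 < t1 then
        cache (eUC ((d U, k), Sum.inl (⟨vα.1.1, hv⟩, vα.2)))
      else
        sg (St.rho U k).1 (St.rho U k).2
          (eY (Sum.inr (⟨vα.1.1 - t1, by have h1 := vα.1.2; omega⟩, vα.2))))
    (fun qβ : Fin (Nat.choose Khat t2) × Fin b =>
      if hu : (St.phi (St.rho U k).1 ⟨U, (St.rho U k).2⟩) ∈ (St.tau.symm qβ.1).1.1 then
        cache (eUC ((d U, k), Sum.inr (St.iT _ ⟨St.tau.symm qβ.1, hu⟩, qβ.2)))
      else
        bZ.symm (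
          bZ (sg (St.rho U k).1 (St.rho U k).2 (eY (Sum.inl
            (St.iY _ ⟨⟨insert (St.phi (St.rho U k).1 ⟨U, (St.rho U k).2⟩)
                (St.tau.symm qβ.1).1, by
                  rw [Finset.card_insert_of_notMem hu, (St.tau.symm qβ.1).2]⟩,
              Finset.mem_insert_self _ _⟩, qβ.2))))
          + ∑ u' ∈ (St.tau.symm qβ.1).1.attach,
              bZ (cache (eUC ((d ((St.phi (St.rho U k).1).symm u'.1).1, k), Sum.inr
                (St.iT (St.phi (St.rho U k).1 ⟨U, (St.rho U k).2⟩)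
                  ⟨⟨(insert (St.phi (St.rho U k).1 ⟨U, (St.rho U k).2⟩)
                      (St.tau.symm qβ.1).1).erase u'.1, by
                        rw [Finset.card_erase_of_mem (Finset.mem_insert_of_mem u'.2),
                          Finset.card_insert_of_notMem hu, (St.tau.symm qβ.1).2]; omega⟩,
                    Finset.mem_erase.2 ⟨fun hEq => hu (hEq ▸ u'.2),
                      Finset.mem_insert_self _ _⟩⟩, qβ.2))))))
    (St.em.symm μ)

noncomputable def decF (U : {U : Finset (Fin h) // U.card = r})
    (cache : Fin (D * r * (t1 * a + Nat.choose (Khat - 1) (t2 - 1) * b)) → Bool)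
    (d : {U : Finset (Fin h) // U.card = r} → Fin D)
    (sg : (j : Fin h) → j ∈ U.1 →
      (Fin (Nat.choose (Khat - 1) t2 * b + (Khat - t1) * a) → Bool)) :
    Fin F → Bool := fun x =>
  St.ef.symm ((Lagrange.interpolate U.1 St.pts
    (fun j' => if hj' : j' ∈ U.1 then
        St.ef (recB St U cache d sg ((St.rho U).symm ⟨j', hj'⟩)) else 0)).coeff
    (St.eqF x).1) (St.eqF x).2


lemma bchunk_mk (w : Fin D → Fin F → Bool) (i : Fin D) (j : Fin h)
    (s : Finset (Fin Khat)) (pf : s.card = t2) (β : Fin b) :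
    bchunk St w i j ⟨s, pf⟩ β = bchunk' St w i j s β := by
  simp only [bchunk', dif_pos pf]

lemma recB_correct (w : Fin D → Fin F → Bool)
    (d : {U : Finset (Fin h) // U.card = r} → Fin D)
    (U : {U : Finset (Fin h) // U.card = r}) (k : Fin r) :
    recB St U (userPlaceF St U w) d
      (fun j _ => YsigF St j U (XsigF St j w d) (relayPlaceF St j w) d) k
    = sbits St w (d U) (St.rho U k).1 := by
  funext μ
  have hμ : St.em (St.em.symm μ) = μ := St.em.apply_symm_apply μ
  simp only [recB]
  rcases hE : St.em.symm μ with vα | qβ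
  · -- a-part
    have hμ' : μ = St.em (Sum.inl vα) := by rw [← hμ, hE]
    simp only [Sum.elim_inl]
    by_cases hv : vα.1.1 < t1
    · rw [dif_pos hv]
      simp only [userPlaceF, Equiv.symm_apply_apply]
      simp only [userContent, Sum.elim_inl, apart, hμ']
      congr
    · rw [dif_neg hv]
      simp only [YsigF, relayPlaceF, Equiv.symm_apply_apply]
      simp only [Ycontent, dif_pos (St.rho U k).2, Sum.elim_inr]
      simp only [relayPlaceF, Equiv.symm_apply_apply, apart, hμ']
      have hval : t1 + (vα.1.1 - t1) = vα.1.1 := by omega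
      simp only [hval, Fin.eta]
  · -- b-part
    have hμ' : μ = St.em (Sum.inr qβ) := by rw [← hμ, hE]
    simp only [Sum.elim_inr]
    by_cases hu : (St.phi (St.rho U k).1 ⟨U, (St.rho U k).2⟩) ∈ (St.tau.symm qβ.1).1.1
    · rw [dif_pos hu]
      simp only [userPlaceF, Equiv.symm_apply_apply]
      simp only [userContent, Sum.elim_inr,
        Function.partialInv_left (St.iT _).injective, Option.elim,
        bchunk, hμ', Equiv.apply_symm_apply]
    · rw [dif_neg hu]
      simp only [YsigF, XsigF, userPlaceF, relayPlaceF, Equiv.symm_apply_apply]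
      simp only [Ycontent, dif_pos (St.rho U k).2, Sum.elim_inl, Sum.elim_inr,
        Function.partialInv_left (St.iY _).injective, Option.elim]
      simp only [XsigF, Equiv.symm_apply_apply]
      simp only [Xcontent, Equiv.symm_apply_apply, userContent, Sum.elim_inr,
        Function.partialInv_left (St.iT _).injective, Option.elim, dem,
        bchunk_mk, Equiv.apply_symm_apply]
      rw [Finset.sum_attach (St.tau.symm qβ.1).1
        (fun v => bZ (bchunk' St w (d ((St.phi (St.rho U k).1).symm v).1) (St.rho U k).1
          ((insert (St.phi (St.rho U k).1 ⟨U, (St.rho U k).2⟩)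
            (St.tau.symm qβ.1).1).erase v) qβ.2))]
      rw [Finset.sum_insert hu, Finset.erase_insert hu, add_add_self]
      simp only [Equiv.symm_apply_apply, Subtype.coe_eta]
      rw [← bchunk_mk St w (d U) (St.rho U k).1 _ (St.tau.symm qβ.1).2]
      simp only [Subtype.coe_eta, bchunk, Equiv.apply_symm_apply, hμ']


lemma dec_correct (hr : 0 < r) (w : Fin D → Fin F → Bool)
    (d : {U : Finset (Fin h) // U.card = r} → Fin D)
    (U : {U : Finset (Fin h) // U.card = r}) :
    decF St U (userPlaceF St U w) d
      (fun j _ => YsigF St j U (XsigF St j w d) (relayPlaceF St j w) d) = w (d U) := by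
  funext x
  rw [decF]
  have hvals : ∀ j' ∈ U.1, (msgPoly (coeffs St w (d U))).eval (St.pts j') =
      (if hj' : j' ∈ U.1 then
        St.ef (recB St U (userPlaceF St U w) d
          (fun j _ => YsigF St j U (XsigF St j w d) (relayPlaceF St j w) d)
          ((St.rho U).symm ⟨j', hj'⟩)) else 0) := by
    intro j' hj'
    rw [dif_pos hj', recB_correct]
    have hjj : (St.rho U ((St.rho U).symm ⟨j', hj'⟩)).1 = j' := by
      rw [Equiv.apply_symm_apply]
    rw [hjj, sbits, Equiv.apply_symm_apply]
  have hinj : Set.InjOn St.pts U.1 := St.pts.injective.injOn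
  have hdeg : (msgPoly (coeffs St w (d U))).degree < (U.1.card : WithBot ℕ) := by
    rw [U.2]; exact msgPoly_degree hr _
  rw [← Lagrange.eq_interpolate_of_eval_eq _ hinj hdeg hvals]
  rw [msgPoly_coeff, coeffs, Equiv.symm_apply_apply]
  simp

end Scheme

end Stmt0Aux

open Stmt0Aux in
/-- Theorem 1 of the paper: existence of a centralized coded caching scheme for a general
combination network with caches at both the relays and the end users, with the stated
cache sizes and per-link signal lengths. Users are identified with `r`-element subsets of
the `h` relays; files are `F`-bit strings. -/
theorem stmt_0 (h r : ℕ) (hr : 1 ≤ r) (hrh : r < h)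
    (Khat : ℕ) (hKhat : Khat = Nat.choose (h - 1) (r - 1))
    (D : ℕ) (hD : Nat.choose h r ≤ D)
    (t1 t2 : ℕ) (ht1 : t1 ≤ Khat) (ht2 : t2 ≤ Khat)
    (a b : ℕ)
    (hMDS : h ≤ 2 ^ (Khat * a + Nat.choose Khat t2 * b))
    (F : ℕ) (hF : F = r * (Khat * a + Nat.choose Khat t2 * b)) :
    ∃ (relayPlace : Fin h → (Fin D → (Fin F → Bool)) → (Fin (D * Khat * a) → Bool))
      (userPlace : {U : Finset (Fin h) // U.card = r} →
        (Fin D → (Fin F → Bool)) →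
        (Fin (D * r * (t1 * a + Nat.choose (Khat - 1) (t2 - 1) * b)) → Bool))
      (X : Fin h → (Fin D → (Fin F → Bool)) →
        ({U : Finset (Fin h) // U.card = r} → Fin D) →
        (Fin (Nat.choose Khat (t2 + 1) * b) → Bool))
      (Y : Fin h → {U : Finset (Fin h) // U.card = r} →
        (Fin (Nat.choose Khat (t2 + 1) * b) → Bool) →
        (Fin (D * Khat * a) → Bool) →
        ({U : Finset (Fin h) // U.card = r} → Fin D) →
        (Fin (Nat.choose (Khat - 1) t2 * b + (Khat - t1) * a) → Bool))
      (dec : (U : {U : Finset (Fin h) // U.card = r}) →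
        (Fin (D * r * (t1 * a + Nat.choose (Khat - 1) (t2 - 1) * b)) → Bool) →
        ({U : Finset (Fin h) // U.card = r} → Fin D) →
        ((j : Fin h) → j ∈ U.1 →
          (Fin (Nat.choose (Khat - 1) t2 * b + (Khat - t1) * a) → Bool)) →
        (Fin F → Bool)),
      ∀ (w : Fin D → (Fin F → Bool)) (d : {U : Finset (Fin h) // U.card = r} → Fin D)
        (U : {U : Finset (Fin h) // U.card = r}),
        dec U (userPlace U w) d
          (fun j _ => Y j U (X j w d) (relayPlace j w) d) = w (d U) := by
  classical
  have hm : Khat * a + Nat.choose Khat t2 * b ≠ 0 := by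
    intro h0
    rw [h0, pow_zero] at hMDS
    omega
  have hcard : h ≤ Fintype.card (GaloisField 2 (Khat * a + Nat.choose Khat t2 * b)) := by
    rw [← Nat.card_eq_fintype_card, GaloisField.card 2 _ hm]
    exact hMDS
  have St : Stmt0Aux.Setup h r Khat D t1 t2 a b
      (Khat * a + Nat.choose Khat t2 * b) F :=
      { ef := bitsEquiv _ hm
        pts := (Fin.castLEEmb hcard).trans
          (Fintype.equivFin (GaloisField 2 (Khat * a + Nat.choose Khat t2 * b))).symm.toEmbedding
        eqF := (finCongr hF).trans finProdFinEquiv.symm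
        em := (Equiv.sumCongr finProdFinEquiv finProdFinEquiv).trans finSumFinEquiv
        phi := fun j => Fintype.equivFinOfCardEq
          (by rw [card_users h r hr j]; exact hKhat.symm)
        rho := fun U => (Fintype.equivFinOfCardEq (by rw [Fintype.card_coe, U.2])).symm
        tau := Fintype.equivFinOfCardEq (by simp)
        sig := Fintype.equivFinOfCardEq (by simp)
        iT := fun u => embFin _ (card_mem_subsets_le Khat t2 u)
        iY := fun u => embFin _ (by simpa using card_mem_subsets_le Khat (t2 + 1) u)
        ht1 := ht1 }
  exact ⟨relayPlaceF St, userPlaceF St, XsigF St, YsigF St, decF St,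
    fun w d U => dec_correct St hr w d U⟩
end

section
/- Let h > r ≥ 1 be integers, K = C(h,r), K̂ = C(h−1,r−1), D ≥ K the number of files, t ∈ {0,1,…,K̂}, and let b be a positive integer with 2^(C(K̂,t)·b) ≥ h; set F = r·C(K̂,t)·b. Then, for every such combination network (no divisibility of h by r, i.e. no resolvability, is required), there exists a caching scheme with no relay caches: user-cache placement functions mapping the D files (each an F-bit string) to user caches of D·r·C(K̂−1,t−1)·b bits each; for every demand vector d, server-to-relay signals of C(K̂,t+1)·b bits and relay-to-user signals of C(K̂−1,t)·b bits (the latter computed only from the relay's received signal and d); and decoding functions so that every user reconstructs its requested file exactly from its cache, d, and the signals received from its r relays, for every file realization and every demand vector. (These bit counts correspond to user memory M·F with M = t·D/K̂, first-hop rate R1 = (K̂/r)·(1 − M/D)/(1 + K̂·M/D), and second-hop rate R2 = (1/r)(1 − M/D).) -/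
namespace Cor2
open Finset Polynomial


open Finset Polynomial

section CardLemmas
variable {α : Type*} [Fintype α] [DecidableEq α]

/-- subsets of card k containing a fixed element. -/
def memEquiv (a : α) (k : ℕ) (hk : 1 ≤ k) :
    {s : Finset α // s.card = k ∧ a ∈ s} ≃
      {s : Finset α // s ∈ (Finset.univ.erase a).powersetCard (k - 1)} where
  toFun s := ⟨s.1.erase a, by
    rw [Finset.mem_powersetCard]
    refine ⟨fun x hx => Finset.mem_erase.2 ⟨(Finset.mem_erase.1 hx).1, Finset.mem_univ x⟩, ?_⟩
    rw [Finset.card_erase_of_mem s.2.2, s.2.1]⟩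
  invFun s := ⟨insert a s.1, by
    have has : a ∉ s.1 := fun hmem =>
      (Finset.mem_erase.1 ((Finset.mem_powersetCard.1 s.2).1 hmem)).1 rfl
    refine ⟨?_, Finset.mem_insert_self a s.1⟩
    rw [Finset.card_insert_of_notMem has, (Finset.mem_powersetCard.1 s.2).2]
    omega⟩
  left_inv s := Subtype.ext (Finset.insert_erase s.2.2)
  right_inv s := Subtype.ext (Finset.erase_insert (fun hmem =>
      (Finset.mem_erase.1 ((Finset.mem_powersetCard.1 s.2).1 hmem)).1 rfl))

lemma card_mem (a : α) (k : ℕ) (hk : 1 ≤ k) :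
    Fintype.card {s : Finset α // s.card = k ∧ a ∈ s} =
      (Fintype.card α - 1).choose (k - 1) := by
  rw [Fintype.card_congr (memEquiv a k hk), Fintype.card_coe,
    Finset.card_powersetCard, Finset.card_erase_of_mem (Finset.mem_univ a), Finset.card_univ]

lemma card_mem_le (a : α) (k : ℕ) :
    Fintype.card {s : Finset α // s.card = k ∧ a ∈ s} ≤
      (Fintype.card α - 1).choose (k - 1) := by
  cases k with
  | zero =>
    have : IsEmpty {s : Finset α // s.card = 0 ∧ a ∈ s} := ⟨fun s => by
      have h0 := Finset.card_eq_zero.1 s.2.1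
      have := s.2.2; rw [h0] at this; exact absurd this (Finset.notMem_empty a)⟩
    rw [Fintype.card_eq_zero]; exact Nat.zero_le _
  | succ k => exact le_of_eq (card_mem a (k+1) (Nat.succ_le_succ (Nat.zero_le _)))

end CardLemmas

section Store
variable {A : Type*} {M : ℕ}

noncomputable def store (ι : A ↪ Fin M) (f : A → Bool) : Fin M → Bool :=
  Function.extend ι f (fun _ => false)

lemma store_apply (ι : A ↪ Fin M) (f : A → Bool) (a : A) : store ι f (ι a) = f a :=
  ι.injective.extend_apply f _ a

end Store

section Poly
variable {K : Type*} [Field K] {r : ℕ}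

noncomputable def msgPoly (a : Fin r → K) : K[X] := ∑ k : Fin r, monomial (k : ℕ) (a k)

lemma degree_msgPoly_lt (a : Fin r → K) (hr : 1 ≤ r) : (msgPoly a).degree < r := by
  refine (degree_sum_le _ _).trans_lt ?_
  rw [Finset.sup_lt_iff]
  · intro k _
    refine (degree_monomial_le _ _).trans_lt ?_
    exact_mod_cast Nat.cast_lt.2 k.2
  · exact_mod_cast (by exact_mod_cast WithBot.bot_lt_coe r : (⊥ : WithBot ℕ) < (r : WithBot ℕ))

lemma coeff_msgPoly (a : Fin r → K) (k : Fin r) : (msgPoly a).coeff k = a k := by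
  rw [msgPoly, finset_sum_coeff]
  rw [Finset.sum_congr rfl (fun k' _ => coeff_monomial ..)]
  simp [Fin.val_inj]

end Poly




noncomputable local instance (n : ℕ) : Fintype (GaloisField 2 n) := Fintype.ofFinite _

lemma card_gf (n : ℕ) (hn : n ≠ 0) : Fintype.card (GaloisField 2 n) = 2 ^ n := by
  rw [← Nat.card_eq_fintype_card, GaloisField.card 2 n hn]

def zOf (v : Bool) : ZMod 2 := if v then 1 else 0
def bOf (z : ZMod 2) : Bool := decide (z = 1)

lemma zOf_bOf (z : ZMod 2) : zOf (bOf z) = z := by fin_cases z <;> simp [zOf, bOf] <;> rfl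
lemma bOf_zOf (v : Bool) : bOf (zOf v) = v := by cases v <;> simp [zOf, bOf]

structure Setup (h r Khat t b : ℕ) : Prop where
  hr : 1 ≤ r
  hrh : r < h
  hKhat : Khat = (h - 1).choose (r - 1)
  ht : t ≤ Khat
  hb : 0 < b
  hMDS : h ≤ 2 ^ (Khat.choose t * b)

variable {h r Khat t b D F : ℕ}

abbrev UserT (h r : ℕ) := {U : Finset (Fin h) // U.card = r}
abbrev Users (h r : ℕ) (j : Fin h) := {U : UserT h r // j ∈ U.1}

lemma Setup.hL (S : Setup h r Khat t b) : Khat.choose t * b ≠ 0 :=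
  Nat.mul_ne_zero (Nat.choose_pos S.ht).ne' S.hb.ne'

lemma card_users (S : Setup h r Khat t b) (j : Fin h) :
    Fintype.card (Users h r j) = Khat := by
  rw [Fintype.card_congr (Equiv.subtypeSubtypeEquivSubtypeInter
    (fun U : Finset (Fin h) => U.card = r) (fun U => j ∈ U)),
    card_mem j r S.hr, Fintype.card_fin, S.hKhat]

/-- Evaluation points for the MDS (Reed–Solomon) code. -/
noncomputable def emb (S : Setup h r Khat t b) :
    Fin h ↪ GaloisField 2 (Khat.choose t * b) :=
  (Function.Embedding.nonempty_of_card_le (by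
    rw [Fintype.card_fin, card_gf _ S.hL]; exact S.hMDS)).some

/-- Bits of a field element. -/
noncomputable def bitsE (S : Setup h r Khat t b) :
    (Fin (Khat.choose t * b) → Bool) ≃ GaloisField 2 (Khat.choose t * b) :=
  Fintype.equivOfCardEq (by
    rw [card_gf _ S.hL, Fintype.card_fun, Fintype.card_bool, Fintype.card_fin])

/-- Splitting the bits of a relay symbol into pieces indexed by `t`-subsets of its users. -/
noncomputable def pieceE (S : Setup h r Khat t b) (j : Fin h) :
    Fin (Khat.choose t * b) ≃ ({T : Finset (Users h r j) // T.card = t} × Fin b) :=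
  (Fintype.equivOfCardEq (by
    rw [Fintype.card_prod, Fintype.card_finset_len, card_users S j, Fintype.card_fin,
      Fintype.card_fin])).symm.symm

/-- The message (r field elements) of a file. -/
noncomputable def fileMsg (S : Setup h r Khat t b) (hF : F = r * (Khat.choose t * b))
    (f : Fin F → Bool) (k : Fin r) : GaloisField 2 (Khat.choose t * b) :=
  bitsE S (fun ℓ => f (finCongr hF.symm (finProdFinEquiv (k, ℓ))))

/-- The MDS symbol of file `f` at relay `j`. -/
noncomputable def symb (S : Setup h r Khat t b) (hF : F = r * (Khat.choose t * b))
    (f : Fin F → Bool) (j : Fin h) : GaloisField 2 (Khat.choose t * b) :=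
  (msgPoly (fileMsg S hF f)).eval (emb S j)

/-- Piece `(T, β)` of the symbol of file `i` at relay `j`, as an element of `ZMod 2`. -/
noncomputable def pieceZ (S : Setup h r Khat t b) (hF : F = r * (Khat.choose t * b))
    (w : Fin D → Fin F → Bool) (i : Fin D) (j : Fin h)
    (T : Finset (Users h r j)) (β : Fin b) : ZMod 2 :=
  if hT : T.card = t then
    zOf ((bitsE S).symm (symb S hF (w i) j) ((pieceE S j).symm (⟨T, hT⟩, β)))
  else 0

/-- Index set for the cache of user `U`. -/
abbrev CIdx (D : ℕ) (U : UserT h r) (t b : ℕ) :=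
  Fin D × ((Σ jh : {j : Fin h // j ∈ U.1},
    {T : Finset (Users h r jh.1) // T.card = t ∧ (⟨U, jh.2⟩ : Users h r jh.1) ∈ T}) × Fin b)

lemma card_cidx_le (S : Setup h r Khat t b) (U : UserT h r) :
    Fintype.card (CIdx D U t b) ≤ D * r * ((Khat - 1).choose (t - 1) * b) := by
  rw [Fintype.card_prod, Fintype.card_prod, Fintype.card_sigma, Fintype.card_fin,
    Fintype.card_fin]
  have hle : ∀ jh : {j : Fin h // j ∈ U.1},
      Fintype.card {T : Finset (Users h r jh.1) //
        T.card = t ∧ (⟨U, jh.2⟩ : Users h r jh.1) ∈ T} ≤ (Khat - 1).choose (t - 1) := by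
    intro jh
    have := card_mem_le (α := Users h r jh.1) ⟨U, jh.2⟩ t
    rwa [card_users S jh.1] at this
  have hsum : ∑ jh : {j : Fin h // j ∈ U.1},
      Fintype.card {T : Finset (Users h r jh.1) //
        T.card = t ∧ (⟨U, jh.2⟩ : Users h r jh.1) ∈ T}
      ≤ r * ((Khat - 1).choose (t - 1)) := by
    calc _ ≤ ∑ _jh : {j : Fin h // j ∈ U.1}, (Khat - 1).choose (t - 1) :=
          Finset.sum_le_sum (fun jh _ => hle jh)
      _ = Fintype.card {j : Fin h // j ∈ U.1} * ((Khat - 1).choose (t - 1)) := by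
          rw [Finset.sum_const, Finset.card_univ, smul_eq_mul]
      _ = r * ((Khat - 1).choose (t - 1)) := by rw [Fintype.card_coe, U.2]
  calc D * ((∑ jh : {j : Fin h // j ∈ U.1},
        Fintype.card {T : Finset (Users h r jh.1) //
          T.card = t ∧ (⟨U, jh.2⟩ : Users h r jh.1) ∈ T}) * b)
      ≤ D * ((r * ((Khat - 1).choose (t - 1))) * b) := by
        exact Nat.mul_le_mul_left _ (Nat.mul_le_mul_right _ hsum)
    _ = D * r * ((Khat - 1).choose (t - 1) * b) := by ring

noncomputable def cacheEmb (S : Setup h r Khat t b) (U : UserT h r) :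
    CIdx D U t b ↪ Fin (D * r * ((Khat - 1).choose (t - 1) * b)) :=
  (Function.Embedding.nonempty_of_card_le (by
    rw [Fintype.card_fin]; exact card_cidx_le S U)).some

/-- Cache placement. -/
noncomputable def place (S : Setup h r Khat t b) (hF : F = r * (Khat.choose t * b))
    (U : UserT h r) (w : Fin D → Fin F → Bool) :
    Fin (D * r * ((Khat - 1).choose (t - 1) * b)) → Bool :=
  store (cacheEmb S U) (fun a => bOf (pieceZ S hF w a.1 a.2.1.1.1 a.2.1.2.1 a.2.2))

abbrev XIdx (h r : ℕ) (j : Fin h) (t b : ℕ) :=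
  {Sx : Finset (Users h r j) // Sx.card = t + 1} × Fin b

noncomputable def xEmb (S : Setup h r Khat t b) (j : Fin h) :
    XIdx h r j t b ↪ Fin (Khat.choose (t + 1) * b) :=
  (Function.Embedding.nonempty_of_card_le (le_of_eq (by
    rw [Fintype.card_fin, Fintype.card_prod, Fintype.card_finset_len, card_users S j,
      Fintype.card_fin]))).some

noncomputable def Xval (S : Setup h r Khat t b) (hF : F = r * (Khat.choose t * b))
    (j : Fin h) (w : Fin D → Fin F → Bool) (d : UserT h r → Fin D)
    (Sx : Finset (Users h r j)) (β : Fin b) : ZMod 2 :=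
  ∑ u ∈ Sx, pieceZ S hF w (d u.1) j (Sx.erase u) β

/-- Server-to-relay signal. -/
noncomputable def Xsig (S : Setup h r Khat t b) (hF : F = r * (Khat.choose t * b))
    (j : Fin h) (w : Fin D → Fin F → Bool) (d : UserT h r → Fin D) :
    Fin (Khat.choose (t + 1) * b) → Bool :=
  store (xEmb S j) (fun a => bOf (Xval S hF j w d a.1.1 a.2))

abbrev YIdx (h r : ℕ) (j : Fin h) (u : Users h r j) (t b : ℕ) :=
  {Sx : Finset (Users h r j) // Sx.card = t + 1 ∧ u ∈ Sx} × Fin b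

noncomputable def yEmb (S : Setup h r Khat t b) (j : Fin h) (u : Users h r j) :
    YIdx h r j u t b ↪ Fin ((Khat - 1).choose t * b) :=
  (Function.Embedding.nonempty_of_card_le (le_of_eq (by
    rw [Fintype.card_fin, Fintype.card_prod, card_mem u (t + 1) (Nat.succ_le_succ (Nat.zero_le _)),
      card_users S j, Fintype.card_fin, Nat.add_sub_cancel]))).some

/-- Relay-to-user signal: a function of the relay signal only. -/
noncomputable def Ysig (S : Setup h r Khat t b) (j : Fin h) (U : UserT h r)
    (xs : Fin (Khat.choose (t + 1) * b) → Bool) : Fin ((Khat - 1).choose t * b) → Bool :=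
  if hj : j ∈ U.1 then
    store (yEmb S j ⟨U, hj⟩) (fun a => xs (xEmb S j (⟨a.1.1, a.1.2.1⟩, a.2)))
  else fun _ => false

noncomputable def cacheZ (S : Setup h r Khat t b) (U : UserT h r)
    (cache : Fin (D * r * ((Khat - 1).choose (t - 1) * b)) → Bool) (i : Fin D)
    (j : Fin h) (hj : j ∈ U.1) (T : Finset (Users h r j)) (β : Fin b) : ZMod 2 :=
  if hT : T.card = t ∧ (⟨U, hj⟩ : Users h r j) ∈ T then
    zOf (cache (cacheEmb S U (i, (⟨⟨j, hj⟩, ⟨T, hT⟩⟩, β))))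
  else 0

noncomputable def recBit (S : Setup h r Khat t b) (U : UserT h r)
    (cache : Fin (D * r * ((Khat - 1).choose (t - 1) * b)) → Bool)
    (d : UserT h r → Fin D) (j : Fin h) (hj : j ∈ U.1)
    (sig : Fin ((Khat - 1).choose t * b) → Bool) (ℓ : Fin (Khat.choose t * b)) : ZMod 2 :=
  if hu : (⟨U, hj⟩ : Users h r j) ∈ (pieceE S j ℓ).1.1 then
    cacheZ S U cache (d U) j hj (pieceE S j ℓ).1.1 (pieceE S j ℓ).2
  else
    zOf (sig (yEmb S j ⟨U, hj⟩ (⟨insert (⟨U, hj⟩ : Users h r j) (pieceE S j ℓ).1.1,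
        by rw [Finset.card_insert_of_notMem hu, (pieceE S j ℓ).1.2],
        Finset.mem_insert_self _ _⟩, (pieceE S j ℓ).2)))
      - ∑ v ∈ (pieceE S j ℓ).1.1, cacheZ S U cache (d v.1) j hj
          ((insert (⟨U, hj⟩ : Users h r j) (pieceE S j ℓ).1.1).erase v) (pieceE S j ℓ).2

noncomputable def recSym (S : Setup h r Khat t b) (U : UserT h r)
    (cache : Fin (D * r * ((Khat - 1).choose (t - 1) * b)) → Bool)
    (d : UserT h r → Fin D) (j : Fin h) (hj : j ∈ U.1)
    (sig : Fin ((Khat - 1).choose t * b) → Bool) : GaloisField 2 (Khat.choose t * b) :=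
  bitsE S (fun ℓ => bOf (recBit S U cache d j hj sig ℓ))

noncomputable def decode (S : Setup h r Khat t b) (hF : F = r * (Khat.choose t * b))
    (U : UserT h r) (cache : Fin (D * r * ((Khat - 1).choose (t - 1) * b)) → Bool)
    (d : UserT h r → Fin D)
    (sigs : (j : Fin h) → j ∈ U.1 → (Fin ((Khat - 1).choose t * b) → Bool)) :
    Fin F → Bool := fun m =>
  (bitsE S).symm
    ((Lagrange.interpolate U.1 (emb S)
      (fun j => if hj : j ∈ U.1 then recSym S U cache d j hj (sigs j hj) else 0)).coeff
      (((finProdFinEquiv.symm (finCongr hF m)).1 : Fin r) : ℕ))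
    ((finProdFinEquiv.symm (finCongr hF m)).2)

lemma pieceZ_eval (S : Setup h r Khat t b) (hF : F = r * (Khat.choose t * b))
    (w : Fin D → Fin F → Bool) (i : Fin D) (j : Fin h) (ℓ : Fin (Khat.choose t * b)) :
    pieceZ S hF w i j (pieceE S j ℓ).1.1 (pieceE S j ℓ).2
      = zOf ((bitsE S).symm (symb S hF (w i) j) ℓ) := by
  rw [pieceZ, dif_pos (pieceE S j ℓ).1.2]
  have : ((⟨(pieceE S j ℓ).1.1, (pieceE S j ℓ).1.2⟩, (pieceE S j ℓ).2) :
      {T : Finset (Users h r j) // T.card = t} × Fin b) = pieceE S j ℓ := rfl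
  rw [this, Equiv.symm_apply_apply]

lemma recBit_eq (S : Setup h r Khat t b) (hF : F = r * (Khat.choose t * b))
    (w : Fin D → Fin F → Bool) (d : UserT h r → Fin D) (U : UserT h r)
    (j : Fin h) (hj : j ∈ U.1) (ℓ : Fin (Khat.choose t * b)) :
    recBit S U (place S hF U w) d j hj (Ysig S j U (Xsig S hF j w d)) ℓ
      = pieceZ S hF w (d U) j (pieceE S j ℓ).1.1 (pieceE S j ℓ).2 := by
  rw [recBit]
  by_cases hu : (⟨U, hj⟩ : Users h r j) ∈ (pieceE S j ℓ).1.1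
  · rw [dif_pos hu, cacheZ, dif_pos ⟨(pieceE S j ℓ).1.2, hu⟩, place, store_apply, zOf_bOf,
      pieceZ, dif_pos (pieceE S j ℓ).1.2]
  · rw [dif_neg hu, Ysig, dif_pos hj, store_apply, Xsig, store_apply, zOf_bOf]
    have hsum : ∑ v ∈ (pieceE S j ℓ).1.1, cacheZ S U (place S hF U w) (d v.1) j hj
          ((insert (⟨U, hj⟩ : Users h r j) (pieceE S j ℓ).1.1).erase v) (pieceE S j ℓ).2
        = ∑ v ∈ (pieceE S j ℓ).1.1, pieceZ S hF w (d v.1) j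
          ((insert (⟨U, hj⟩ : Users h r j) (pieceE S j ℓ).1.1).erase v) (pieceE S j ℓ).2 := by
      refine Finset.sum_congr rfl (fun v hv => ?_)
      have hvu : v ≠ (⟨U, hj⟩ : Users h r j) := fun e => hu (e ▸ hv)
      have hvS : v ∈ insert (⟨U, hj⟩ : Users h r j) (pieceE S j ℓ).1.1 :=
        Finset.mem_insert_of_mem hv
      have hcard : ((insert (⟨U, hj⟩ : Users h r j) (pieceE S j ℓ).1.1).erase v).card = t := by
        rw [Finset.card_erase_of_mem hvS, Finset.card_insert_of_notMem hu, (pieceE S j ℓ).1.2]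
        omega
      have humem : (⟨U, hj⟩ : Users h r j)
          ∈ (insert (⟨U, hj⟩ : Users h r j) (pieceE S j ℓ).1.1).erase v :=
        Finset.mem_erase.2 ⟨hvu.symm, Finset.mem_insert_self _ _⟩
      rw [cacheZ, dif_pos ⟨hcard, humem⟩, place, store_apply, zOf_bOf, pieceZ, dif_pos hcard]
    rw [hsum, Xval,
      ← Finset.add_sum_erase _ _ (Finset.mem_insert_self (⟨U, hj⟩ : Users h r j) (pieceE S j ℓ).1.1),
      Finset.erase_insert hu, add_sub_cancel_right]

lemma recSym_eq (S : Setup h r Khat t b) (hF : F = r * (Khat.choose t * b))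
    (w : Fin D → Fin F → Bool) (d : UserT h r → Fin D) (U : UserT h r)
    (j : Fin h) (hj : j ∈ U.1) :
    recSym S U (place S hF U w) d j hj (Ysig S j U (Xsig S hF j w d))
      = symb S hF (w (d U)) j := by
  rw [recSym]
  have : (fun ℓ => bOf (recBit S U (place S hF U w) d j hj
      (Ysig S j U (Xsig S hF j w d)) ℓ)) = (bitsE S).symm (symb S hF (w (d U)) j) :=
    funext fun ℓ => by rw [recBit_eq S hF w d U j hj ℓ, pieceZ_eval, bOf_zOf]
  rw [this, Equiv.apply_symm_apply]

theorem main (S : Setup h r Khat t b) (hF : F = r * (Khat.choose t * b))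
    (w : Fin D → Fin F → Bool) (d : UserT h r → Fin D) (U : UserT h r) :
    decode S hF U (place S hF U w) d
      (fun j _hj => Ysig S j U (Xsig S hF j w d)) = w (d U) := by
  funext m
  rw [decode]
  have hvals : ∀ j ∈ U.1, (msgPoly (fileMsg S hF (w (d U)))).eval (emb S j)
      = (fun j => if hj : j ∈ U.1 then recSym S U (place S hF U w) d j hj
          (Ysig S j U (Xsig S hF j w d)) else 0) j := by
    intro j hj
    simp only [dif_pos hj]
    rw [recSym_eq S hF w d U j hj, symb]
  have hdeg : (msgPoly (fileMsg S hF (w (d U)))).degree < (U.1.card : WithBot ℕ) := by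
    rw [U.2]; exact degree_msgPoly_lt _ S.hr
  rw [← Lagrange.eq_interpolate_of_eval_eq _ (Function.Embedding.injective (emb S)).injOn hdeg hvals,
    coeff_msgPoly, fileMsg, Equiv.symm_apply_apply]
  congr 1
  have : (((finProdFinEquiv.symm (finCongr hF m)).1 : Fin r),
      ((finProdFinEquiv.symm (finCongr hF m)).2 : Fin (Khat.choose t * b)))
      = finProdFinEquiv.symm (finCongr hF m) := rfl
  rw [this, Equiv.apply_symm_apply]
  simp

end Cor2

/-- Corollary 1 of the paper: existence of a centralized coded caching scheme for any
combination network without relay caches (no resolvability assumption), achieving the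
Tang–Ramamoorthy rates. The relay-to-user signal is computed only from the relay's
received signal and the demand vector. -/
theorem stmt_1 (h r : ℕ) (hr : 1 ≤ r) (hrh : r < h)
    (Khat : ℕ) (hKhat : Khat = Nat.choose (h - 1) (r - 1))
    (D : ℕ) (hD : Nat.choose h r ≤ D)
    (t : ℕ) (ht : t ≤ Khat)
    (b : ℕ) (hb : 0 < b)
    (hMDS : h ≤ 2 ^ (Nat.choose Khat t * b))
    (F : ℕ) (hF : F = r * (Nat.choose Khat t * b)) :
    ∃ (userPlace : {U : Finset (Fin h) // U.card = r} →
        (Fin D → (Fin F → Bool)) →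
        (Fin (D * r * (Nat.choose (Khat - 1) (t - 1) * b)) → Bool))
      (X : Fin h → (Fin D → (Fin F → Bool)) →
        ({U : Finset (Fin h) // U.card = r} → Fin D) →
        (Fin (Nat.choose Khat (t + 1) * b) → Bool))
      (Y : Fin h → {U : Finset (Fin h) // U.card = r} →
        (Fin (Nat.choose Khat (t + 1) * b) → Bool) →
        ({U : Finset (Fin h) // U.card = r} → Fin D) →
        (Fin (Nat.choose (Khat - 1) t * b) → Bool))
      (dec : (U : {U : Finset (Fin h) // U.card = r}) →
        (Fin (D * r * (Nat.choose (Khat - 1) (t - 1) * b)) → Bool) →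
        ({U : Finset (Fin h) // U.card = r} → Fin D) →
        ((j : Fin h) → j ∈ U.1 → (Fin (Nat.choose (Khat - 1) t * b) → Bool)) →
        (Fin F → Bool)),
      ∀ (w : Fin D → (Fin F → Bool)) (d : {U : Finset (Fin h) // U.card = r} → Fin D)
        (U : {U : Finset (Fin h) // U.card = r}),
        dec U (userPlace U w) d
          (fun j _ => Y j U (X j w d) d) = w (d U) := by
  have S : Cor2.Setup h r Khat t b := ⟨hr, hrh, hKhat, ht, hb, hMDS⟩
  exact ⟨Cor2.place S hF, fun j w d => Cor2.Xsig S hF j w d,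
    fun j U xs _d => Cor2.Ysig S j U xs, Cor2.decode S hF,
    fun w d U => Cor2.main S hF w d U⟩
end

section
/- Let D, F, l, s, q be positive integers with s·q ≤ D, and let 𝒳, 𝒞_R, 𝒞_U be finite sets. Suppose there are functions serverSig : ({0,1}^F)^D → 𝒳^(q·l) (server signals to l relays over q demand instances), relayCache : ({0,1}^F)^D → 𝒞_R^l, userCache : ({0,1}^F)^D → 𝒞_U^s, and a reconstruction function ρ such that for every file realization w ∈ ({0,1}^F)^D, ρ(serverSig(w), relayCache(w), userCache(w)) equals the tuple (w_1, …, w_{s·q}) of the first s·q files. Then 2^{s·q·F} ≤ |𝒳|^{q·l} · |𝒞_R|^l · |𝒞_U|^s. In particular, if |𝒳| = 2^{R1·F}, |𝒞_R| = 2^{N·F}, and |𝒞_U| = 2^{M·F} for nonnegative rationals R1, N, M with integer bit counts, then R1 ≥ (1/l)·(s − (s·M + l·N)/q). -/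
/-- Genie-aided cut-set lower bound on the first-hop rate (Theorem 2, first part) in
deterministic-code form: if the first `s·q` files can be reconstructed from the server
signals to `l` relays over `q` demand instances, the `l` relay caches and the `s` user
caches, then a counting bound holds, and consequently
`R1 ≥ (1/l)·(s − (s·M + l·N)/q)` for the corresponding normalized rates. -/
theorem stmt_2 (D F l s q : ℕ) (hD : 0 < D) (hF : 0 < F) (hl : 0 < l) (hs : 0 < s)
    (hq : 0 < q) (hsq : s * q ≤ D)
    (X CR CU : Type*) [Fintype X] [Fintype CR] [Fintype CU]
    (serverSig : (Fin D → (Fin F → Bool)) → (Fin (q * l) → X))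
    (relayCache : (Fin D → (Fin F → Bool)) → (Fin l → CR))
    (userCache : (Fin D → (Fin F → Bool)) → (Fin s → CU))
    (ρ : (Fin (q * l) → X) → (Fin l → CR) → (Fin s → CU) →
      (Fin (s * q) → (Fin F → Bool)))
    (hρ : ∀ w, ρ (serverSig w) (relayCache w) (userCache w) =
      fun i => w (Fin.castLE hsq i)) :
    2 ^ (s * q * F) ≤
        Fintype.card X ^ (q * l) * Fintype.card CR ^ l * Fintype.card CU ^ s ∧
      ∀ (R1 N M : ℚ), 0 ≤ R1 → 0 ≤ N → 0 ≤ M →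
        (∃ x : ℕ, (x : ℚ) = R1 * F ∧ Fintype.card X = 2 ^ x) →
        (∃ y : ℕ, (y : ℚ) = N * F ∧ Fintype.card CR = 2 ^ y) →
        (∃ z : ℕ, (z : ℚ) = M * F ∧ Fintype.card CU = 2 ^ z) →
        R1 ≥ (1 / (l : ℚ)) * ((s : ℚ) - ((s : ℚ) * M + (l : ℚ) * N) / (q : ℚ)) := by
  -- extension of a partial file assignment
  set ext : (Fin (s * q) → (Fin F → Bool)) → (Fin D → (Fin F → Bool)) :=
    fun v i => if h : (i : ℕ) < s * q then v ⟨i, h⟩ else fun _ => false with hext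
  have hrec : ∀ v, ρ (serverSig (ext v)) (relayCache (ext v)) (userCache (ext v)) = v := by
    intro v
    rw [hρ]
    funext i
    simp [hext, i.isLt]
  have hinj : Function.Injective
      (fun v : Fin (s * q) → (Fin F → Bool) =>
        (serverSig (ext v), relayCache (ext v), userCache (ext v))) := by
    intro v1 v2 h
    have h1 := hrec v1
    have h2 := hrec v2
    simp only [Prod.mk.injEq] at h
    rw [← h1, ← h2, h.1, h.2.1, h.2.2]
  have hcard := Fintype.card_le_of_injective _ hinj
  have hbound : 2 ^ (s * q * F) ≤
      Fintype.card X ^ (q * l) * Fintype.card CR ^ l * Fintype.card CU ^ s := by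
    have := hcard
    simp only [Fintype.card_prod, Fintype.card_fun, Fintype.card_fin, Fintype.card_bool] at this
    calc 2 ^ (s * q * F) = (2 ^ F) ^ (s * q) := by rw [← pow_mul, mul_comm F]
      _ ≤ _ := by rw [mul_assoc]; exact this
  refine ⟨hbound, ?_⟩
  rintro R1 N M hR1 hN hM ⟨x, hx, hX⟩ ⟨y, hy, hY⟩ ⟨z, hz, hZ⟩
  -- turn counting bound into exponent inequality
  have hexp : s * q * F ≤ x * (q * l) + (y * l + z * s) := by
    have h2 : (2 : ℕ) ^ (s * q * F) ≤ 2 ^ (x * (q * l) + (y * l + z * s)) := by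
      calc (2:ℕ) ^ (s * q * F) ≤ _ := hbound
        _ = 2 ^ (x * (q * l) + (y * l + z * s)) := by
          rw [hX, hY, hZ, ← pow_mul, ← pow_mul, ← pow_mul, ← pow_add, ← pow_add, add_assoc]
    exact (Nat.pow_le_pow_iff_right (by norm_num)).mp h2
  have hexpQ : (s : ℚ) * q * F ≤ R1 * F * (q * l) + (N * F * l + M * F * s) := by
    have := (Nat.cast_le (α := ℚ)).mpr hexp
    push_cast at this
    rw [hx, hy, hz] at this
    exact this
  have hF' : (0 : ℚ) < F := by exact_mod_cast hF
  have hl' : (0 : ℚ) < l := by exact_mod_cast hl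
  have hq' : (0 : ℚ) < q := by exact_mod_cast hq
  -- divide by F
  have hkey : (s : ℚ) * q ≤ R1 * (q * l) + (N * l + M * s) := by
    have h := hexpQ
    nlinarith [hF', h]
  rw [ge_iff_le, ← sub_nonneg]
  have hexpand : R1 - (1 / (l:ℚ)) * ((s:ℚ) - ((s:ℚ) * M + (l:ℚ) * N) / (q:ℚ)) =
      (R1 * (q * l) + (N * l + M * s) - s * q) / (l * q) := by
    field_simp
    ring
  rw [hexpand]
  apply div_nonneg
  · linarith
  · positivity
end

section
/- Let D, F, r be positive integers and let 𝒞_U, 𝒴 be finite sets. Suppose there are functions userCache : ({0,1}^F)^D → 𝒞_U and Y : ({0,1}^F)^D → 𝒴^(r·D) (the r relay-to-user signals received in each of D demand instances), and a reconstruction function ρ such that for every file realization w ∈ ({0,1}^F)^D, ρ(userCache(w), Y(w)) = w. Then 2^{D·F} ≤ |𝒞_U| · |𝒴|^{r·D}. In particular, if |𝒞_U| = 2^{M·F} and |𝒴| = 2^{R2·F} for nonnegative rationals M, R2 with integer bit counts, then R2 ≥ (1/r)·(1 − M/D). -/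
/-- Cut-set lower bound on the second-hop (relay-to-user) rate (Theorem 2, second part)
in deterministic-code form: if a single user can reconstruct all `D` files from its cache
and the `r·D` relay-to-user signals received over `D` demand instances, then a counting
bound holds, and consequently `R2 ≥ (1/r)·(1 − M/D)`. -/
theorem stmt_3 (D F r : ℕ) (hD : 0 < D) (hF : 0 < F) (hr : 0 < r)
    (CU Y : Type*) [Fintype CU] [Fintype Y]
    (userCache : (Fin D → (Fin F → Bool)) → CU)
    (sig : (Fin D → (Fin F → Bool)) → (Fin (r * D) → Y))
    (ρ : CU → (Fin (r * D) → Y) → (Fin D → (Fin F → Bool)))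
    (hρ : ∀ w, ρ (userCache w) (sig w) = w) :
    2 ^ (D * F) ≤ Fintype.card CU * Fintype.card Y ^ (r * D) ∧
      ∀ (M R2 : ℚ), 0 ≤ M → 0 ≤ R2 →
        (∃ z : ℕ, (z : ℚ) = M * F ∧ Fintype.card CU = 2 ^ z) →
        (∃ y : ℕ, (y : ℚ) = R2 * F ∧ Fintype.card Y = 2 ^ y) →
        R2 ≥ (1 / (r : ℚ)) * (1 - M / (D : ℚ)) := by
  have hinj : Function.Injective (fun w : (Fin D → (Fin F → Bool)) =>
      (userCache w, sig w)) := by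
    intro a b hab
    have h1 : userCache a = userCache b := congrArg Prod.fst hab
    have h2 : sig a = sig b := congrArg Prod.snd hab
    calc a = ρ (userCache a) (sig a) := (hρ a).symm
      _ = ρ (userCache b) (sig b) := by rw [h1, h2]
      _ = b := hρ b
  have hcard := Fintype.card_le_of_injective _ hinj
  simp only [Fintype.card_prod, Fintype.card_fun, Fintype.card_bool, Fintype.card_fin] at hcard
  have hmain : 2 ^ (D * F) ≤ Fintype.card CU * Fintype.card Y ^ (r * D) := by
    calc 2 ^ (D * F) = (2 ^ F) ^ D := by rw [← pow_mul, mul_comm]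
      _ ≤ _ := hcard
  refine ⟨hmain, ?_⟩
  rintro M R2 hM hR2 ⟨z, hz, hzc⟩ ⟨y, hy, hyc⟩
  rw [hzc, hyc, ← pow_mul, ← pow_add] at hmain
  have hexp : D * F ≤ z + y * (r * D) := by
    exact (pow_le_pow_iff_right₀ (by norm_num)).mp hmain
  have hq : (D : ℚ) * F ≤ M * F + R2 * F * (r * D) := by
    have := (Nat.cast_le (α := ℚ)).mpr hexp
    push_cast at this
    rw [hz, hy] at this
    linarith
  have hD' : (0 : ℚ) < D := by exact_mod_cast hD
  have hF' : (0 : ℚ) < F := by exact_mod_cast hF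
  have hr' : (0 : ℚ) < r := by exact_mod_cast hr
  rw [ge_iff_le, div_mul_eq_mul_div, one_mul, div_le_iff₀ hr', sub_le_iff_le_add]
  have hMD : M / D * D = M := div_mul_cancel₀ _ hD'.ne'
  have h1 : (D : ℚ) ≤ M + R2 * r * D := by
    have := le_of_mul_le_mul_right (by nlinarith : (D : ℚ) * F ≤ (M + R2 * r * D) * F) hF'
    linarith
  nlinarith [hMD]
end

section
/- Let G be an additive commutative group, let K̂ ≥ 1 and 0 ≤ t ≤ K̂ − 1 be integers, let D be a positive integer, let p be a function assigning an element p(n, T) of G to every file index n ∈ {1,…,D} and every t-element subset T of {1,…,K̂} (the 'pieces' or 'shares'), and let d : {1,…,K̂} → {1,…,D} be a demand assignment. For every (t+1)-element subset S of {1,…,K̂} define the multicast signal X_S = Σ_{i ∈ S} p(d(i), S \ {i}). Then for every k ∈ {1,…,K̂} and every t-element subset T of {1,…,K̂} with k ∉ T, one has p(d(k), T) = X_{T ∪ {k}} − Σ_{i ∈ T} p(d(i), (T ∪ {k}) \ {i}), and moreover every subtracted term p(d(i), (T ∪ {k}) \ {i}) with i ∈ T has k ∈ (T ∪ {k}) \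 {i}. Consequently, a user k whose cache contains exactly the pieces {p(n, T') : n ∈ {1,…,D}, T' a t-subset with k ∈ T'} can compute every piece p(d(k), T) of its demanded file from its cache together with the signals {X_S : k ∈ S, |S| = t+1}. -/
/-- Correctness lemma for the coded delivery procedure: with pieces `p n T` indexed by
`t`-subsets `T` of `{1,…,K̂}` and multicast signals `X_S = ∑_{i∈S} p (d i) (S \ {i})`
over `(t+1)`-subsets `S`, every user `k` recovers each missing piece `p (d k) T`
(`k ∉ T`) from the signal `X_{T∪{k}}` by subtracting pieces whose index set contains `k`
(hence cached). Consequently user `k` can compute all pieces of its demanded file from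
its cache and the signals `{X_S : k ∈ S}`. -/
theorem stmt_4 {G : Type*} [AddCommGroup G] (Khat t D : ℕ)
    (hK : 1 ≤ Khat) (ht : t ≤ Khat - 1) (hD : 0 < D)
    (p : Fin D → Finset (Fin Khat) → G) (d : Fin Khat → Fin D) :
    (∀ (k : Fin Khat) (T : Finset (Fin Khat)), T.card = t → k ∉ T →
      (p (d k) T =
        (∑ i ∈ insert k T, p (d i) (insert k T \ {i})) -
          ∑ i ∈ T, p (d i) (insert k T \ {i})) ∧
      ∀ i ∈ T, k ∈ insert k T \ {i}) ∧
    ∀ k : Fin Khat,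
      ∃ g : (Fin D → {T' : Finset (Fin Khat) // T'.card = t ∧ k ∈ T'} → G) →
          ({S : Finset (Fin Khat) // S.card = t + 1 ∧ k ∈ S} → G) →
          ({T : Finset (Fin Khat) // T.card = t} → G),
        ∀ q : Fin D → Finset (Fin Khat) → G,
          g (fun n T' => q n T'.1) (fun S => ∑ i ∈ S.1, q (d i) (S.1 \ {i})) =
            fun T => q (d k) T.1 := by
  classical
  have key : ∀ (q : Fin D → Finset (Fin Khat) → G) (k : Fin Khat)
      (T : Finset (Fin Khat)), k ∉ T →
      q (d k) T =
        (∑ i ∈ insert k T, q (d i) (insert k T \ {i})) -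
          ∑ i ∈ T, q (d i) (insert k T \ {i}) := by
    intro q k T hkT
    rw [Finset.sum_insert hkT]
    have : insert k T \ {k} = T := by
      ext x
      simp only [Finset.mem_sdiff, Finset.mem_insert, Finset.mem_singleton]
      constructor
      · rintro ⟨h1 | h1, h2⟩ <;> [exact absurd h1 h2; exact h1]
      · intro hx; exact ⟨Or.inr hx, fun h => hkT (h ▸ hx)⟩
    rw [this]; abel
  constructor
  · intro k T hT hkT
    refine ⟨key p k T hkT, fun i hi => ?_⟩
    simp only [Finset.mem_sdiff, Finset.mem_insert, Finset.mem_singleton]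
    exact ⟨Or.inl trivial, fun h => hkT (h ▸ hi)⟩
  · intro k
    refine ⟨fun c X T =>
      if hk : k ∈ T.1 then c (d k) ⟨T.1, T.2, hk⟩
      else X ⟨insert k T.1, by rw [Finset.card_insert_of_notMem hk, T.2], Finset.mem_insert_self _ _⟩ -
        ∑ i ∈ T.1.attach, c (d i.1) ⟨insert k T.1 \ {i.1}, by
          constructor
          · rw [Finset.card_sdiff_of_subset (by simp [i.2]), Finset.card_insert_of_notMem hk,
              Finset.card_singleton, T.2]
            omega
          · simp only [Finset.mem_sdiff, Finset.mem_insert, Finset.mem_singleton]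
            exact ⟨Or.inl trivial, fun h => hk (h ▸ i.2)⟩⟩, ?_⟩
    intro q
    funext T
    by_cases hk : k ∈ T.1
    · simp [hk]
    · simp only [hk, dif_neg, not_false_iff]
      rw [key q k T.1 hk, Finset.sum_attach T.1 (fun i => q (d i) (insert k T.1 \ {i}))]
end

section
/- Let K̂ ≥ 1 and t1, t2 be natural numbers with t1 ≤ K̂ and t2 ≤ K̂, and let D > 0, r > 0, N ≥ 0 be real numbers. Set M = (t1 − t2)·N·r/K̂ + t2·D/K̂. Then (C(K̂−1, t2)/C(K̂, t2))·(1/r − N/D) + (1 − t1/K̂)·(N/D) = (1/r)·(1 − M/D). In particular, the second-hop (relay-to-user) rate of the scheme of Theorem 1 equals (1/r)(1 − M/D), depending only on the user-cache size M. -/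
/-- Second-hop rate verification for the scheme of Theorem 1 (equation (14)): the
per-user relay transmission equals `(1/r)(1 − M/D)` where
`M = (t1 − t2)·N·r/K̂ + t2·D/K̂`. -/
theorem stmt_7 (Khat t1 t2 : ℕ) (hK : 1 ≤ Khat) (ht1 : t1 ≤ Khat) (ht2 : t2 ≤ Khat)
    (D r N : ℝ) (hD : 0 < D) (hr : 0 < r) (hN : 0 ≤ N)
    (M : ℝ)
    (hM : M = ((t1 : ℝ) - (t2 : ℝ)) * N * r / (Khat : ℝ) + (t2 : ℝ) * D / (Khat : ℝ)) :
    ((Nat.choose (Khat - 1) t2 : ℝ) / (Nat.choose Khat t2 : ℝ)) * (1 / r - N / D) +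
      (1 - (t1 : ℝ) / (Khat : ℝ)) * (N / D) = (1 / r) * (1 - M / D) := by
  have hKpos : (0 : ℝ) < (Khat : ℝ) := by exact_mod_cast hK
  have hcpos : (0 : ℝ) < (Nat.choose Khat t2 : ℝ) := by
    exact_mod_cast Nat.choose_pos ht2
  have hc : ((Khat - 1).choose t2 : ℝ) * (Khat : ℝ)
      = (Khat.choose t2 : ℝ) * ((Khat : ℝ) - (t2 : ℝ)) := by
    have h := Nat.choose_mul_succ_eq (Khat - 1) t2
    rw [Nat.sub_add_cancel hK] at h
    have := congrArg (Nat.cast (R := ℝ)) h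
    push_cast [Nat.cast_sub ht2] at this
    linarith
  have hratio : ((Khat - 1).choose t2 : ℝ) / (Khat.choose t2 : ℝ)
      = ((Khat : ℝ) - (t2 : ℝ)) / (Khat : ℝ) := by
    rw [div_eq_div_iff hcpos.ne' hKpos.ne']
    linarith
  rw [hratio, hM]
  field_simp
  ring
end
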